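/- (Theorem 4.1) Suppose (A,b) is symplectic with b_i ≠ 0 for all i, and there exists an invertible real n×n matrix P with P·K·P^{−1} = −Kᵀ and P·Dg(y)·P^{−1} = −Dg(y)ᵀ for all y ∈ ℝ^n. Then at every point y ∈ ℝ^n where I_{sn} − h·Ā·F(y) is invertible, the special symplectic exponential integrator satisfies det(Dφ_h(y)) = 1; that is, it preserves volume for vector fields of class 𝓗. -/

import Mathlib

open Matrix

/-- The Jacobian matrix of a map `f : ℝ^ι → ℝ^ι` at a point `y`. -/
noncomputable def jac {ι : Type*} [Fintype ι] [DecidableEq ι]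
    (f : (ι → ℝ) → (ι → ℝ)) (y : ι → ℝ) : Matrix ι ι ℝ :=
  LinearMap.toMatrix' ((fderiv ℝ f y).toLinearMap)

/-- A Runge–Kutta pair `(A, b)` is symplectic. -/
def IsSymplecticRK {s : ℕ} (A : Matrix (Fin s) (Fin s) ℝ) (b : Fin s → ℝ) : Prop :=
  ∀ i j, b i * A i j + b j * A j i - b i * b j = 0

section Helpers

/-! ### Jacobian calculus helpers -/

noncomputable def mvCLM {n : ℕ} (M : Matrix (Fin n) (Fin n) ℝ) :
    (Fin n → ℝ) →L[ℝ] (Fin n → ℝ) := (Matrix.toLin' M).toContinuousLinearMap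

lemma mvCLM_coe {n : ℕ} (M : Matrix (Fin n) (Fin n) ℝ) :
    (fun z : Fin n → ℝ => M.mulVec z) = ⇑(mvCLM M) := by
  funext v; simp [mvCLM, Matrix.toLin'_apply]

lemma mvCLM_toLM {n : ℕ} (M : Matrix (Fin n) (Fin n) ℝ) :
    ((mvCLM M : (Fin n → ℝ) →L[ℝ] (Fin n → ℝ)) : (Fin n → ℝ) →ₗ[ℝ] (Fin n → ℝ))
      = Matrix.toLin' M := by
  simp [mvCLM]

lemma jac_update {n : ℕ} {ι : Type*} [Fintype ι] [DecidableEq ι] (h : ℝ)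
    (M : Matrix (Fin n) (Fin n) ℝ) (N : ι → Matrix (Fin n) (Fin n) ℝ)
    (g : (Fin n → ℝ) → (Fin n → ℝ)) (hg : Differentiable ℝ g)
    (u : ι → (Fin n → ℝ) → (Fin n → ℝ)) (hu : ∀ i, Differentiable ℝ (u i))
    (y : Fin n → ℝ) :
    jac (fun z => M.mulVec z + h • ∑ i, (N i).mulVec (g (u i z))) y
      = M + h • ∑ i, N i * (jac g (u i y) * jac (u i) y) := by
  have hdc : ∀ i : ι, DifferentiableAt ℝ (fun z => (N i).mulVec (g (u i z))) y := by
    intro i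
    have : (fun z => (N i).mulVec (g (u i z))) = ⇑(mvCLM (N i)) ∘ g ∘ (u i) := by
      funext z; simp [← mvCLM_coe, Function.comp]
    rw [this]
    exact ((mvCLM (N i)).differentiableAt.comp _ ((hg _).comp _ (hu i y)))
  have hdsum : DifferentiableAt ℝ (fun z => ∑ i, (N i).mulVec (g (u i z))) y :=
    DifferentiableAt.fun_sum (fun i _ => hdc i)
  have hdA : DifferentiableAt ℝ (fun z : Fin n → ℝ => M.mulVec z) y := by
    rw [mvCLM_coe]; exact (mvCLM M).differentiableAt
  have hEach : ∀ i : ι, fderiv ℝ (fun z => (N i).mulVec (g (u i z))) y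
      = ((mvCLM (N i)).comp (fderiv ℝ g (u i y))).comp (fderiv ℝ (u i) y) := by
    intro i
    have h2 : (fun z => (N i).mulVec (g (u i z))) = (⇑(mvCLM (N i)) ∘ g) ∘ (u i) := by
      funext z; simp [← mvCLM_coe, Function.comp]
    rw [h2, fderiv_comp y (((mvCLM (N i)).differentiableAt).comp _ (hg _)) (hu i y)]
    congr 1
    rw [fderiv_comp _ (mvCLM (N i)).differentiableAt (hg _), (mvCLM (N i)).fderiv]
  have hfd : fderiv ℝ (fun z => M.mulVec z + h • ∑ i, (N i).mulVec (g (u i z))) y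
      = mvCLM M + h • ∑ i, ((mvCLM (N i)).comp (fderiv ℝ g (u i y))).comp
          (fderiv ℝ (u i) y) := by
    rw [fderiv_fun_add (g := fun z => h • ∑ i, (N i).mulVec (g (u i z))) hdA (hdsum.const_smul h), fderiv_fun_const_smul hdsum h,
      fderiv_fun_sum (fun i _ => hdc i)]
    congr 1
    · rw [mvCLM_coe]; exact (mvCLM M).fderiv
    · congr 1
      exact Finset.sum_congr rfl fun i _ => hEach i
  unfold jac
  rw [hfd]
  simp only [ContinuousLinearMap.coe_add, ContinuousLinearMap.coe_smul,
    ContinuousLinearMap.coe_sum, ContinuousLinearMap.toLinearMap_comp, map_add, _root_.map_smul,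
    map_sum, LinearMap.toMatrix'_comp, mvCLM_toLM, LinearMap.toMatrix'_toLin',
    Matrix.mul_assoc]

/-! ### Block matrix helpers -/

variable {s n : ℕ}

def blk (Q : Fin s → Fin s → Matrix (Fin n) (Fin n) ℝ) :
    Matrix (Fin s × Fin n) (Fin s × Fin n) ℝ := Matrix.of fun p q => Q p.1 q.1 p.2 q.2

def cblk (Q : Fin s → Matrix (Fin n) (Fin n) ℝ) :
    Matrix (Fin s × Fin n) (Fin n) ℝ := Matrix.of fun p j => Q p.1 p.2 j

def rblk (Q : Fin s → Matrix (Fin n) (Fin n) ℝ) :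
    Matrix (Fin n) (Fin s × Fin n) ℝ := Matrix.of fun i q => Q q.1 i q.2

lemma blk_congr {Q R : Fin s → Fin s → Matrix (Fin n) (Fin n) ℝ}
    (h : ∀ i j, Q i j = R i j) : blk Q = blk R := by
  unfold blk; congr 1; funext p q; rw [h]

lemma cblk_congr {Q R : Fin s → Matrix (Fin n) (Fin n) ℝ}
    (h : ∀ i, Q i = R i) : cblk Q = cblk R := by
  unfold cblk; congr 1; funext p q; rw [h]

lemma blk_mul (Q R : Fin s → Fin s → Matrix (Fin n) (Fin n) ℝ) :
    blk Q * blk R = blk (fun i j => ∑ l, Q i l * R l j) := by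
  ext ⟨i, x⟩ ⟨j, z⟩
  simp [blk, Matrix.mul_apply, Fintype.sum_prod_type, Matrix.sum_apply]

lemma blk_one : (1 : Matrix (Fin s × Fin n) (Fin s × Fin n) ℝ)
    = blk (fun i j => if i = j then 1 else 0) := by
  ext ⟨i, x⟩ ⟨j, z⟩
  by_cases hij : i = j <;> simp [blk, Matrix.one_apply, Prod.ext_iff, hij]

lemma blk_smul (r : ℝ) (Q : Fin s → Fin s → Matrix (Fin n) (Fin n) ℝ) :
    r • blk Q = blk (fun i j => r • Q i j) := by
  ext ⟨i, x⟩ ⟨j, z⟩; simp [blk]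

lemma blk_add (Q R : Fin s → Fin s → Matrix (Fin n) (Fin n) ℝ) :
    blk Q + blk R = blk (fun i j => Q i j + R i j) := by
  ext ⟨i, x⟩ ⟨j, z⟩; simp [blk]

lemma blk_sub (Q R : Fin s → Fin s → Matrix (Fin n) (Fin n) ℝ) :
    blk Q - blk R = blk (fun i j => Q i j - R i j) := by
  ext ⟨i, x⟩ ⟨j, z⟩; simp [blk]

lemma blk_transpose (Q : Fin s → Fin s → Matrix (Fin n) (Fin n) ℝ) :
    (blk Q)ᵀ = blk (fun i j => (Q j i)ᵀ) := by
  ext ⟨i, x⟩ ⟨j, z⟩; simp [blk]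

lemma blk_mul_cblk (Q : Fin s → Fin s → Matrix (Fin n) (Fin n) ℝ)
    (R : Fin s → Matrix (Fin n) (Fin n) ℝ) :
    blk Q * cblk R = cblk (fun i => ∑ l, Q i l * R l) := by
  ext ⟨i, x⟩ z
  simp [blk, cblk, Matrix.mul_apply, Fintype.sum_prod_type, Matrix.sum_apply]

lemma cblk_mul_rblk (Q R : Fin s → Matrix (Fin n) (Fin n) ℝ) :
    cblk Q * rblk R = blk (fun i j => Q i * R j) := by
  ext ⟨i, x⟩ ⟨j, z⟩
  simp [blk, cblk, rblk, Matrix.mul_apply]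

lemma rblk_mul_cblk (Q R : Fin s → Matrix (Fin n) (Fin n) ℝ) :
    rblk Q * cblk R = ∑ l, Q l * R l := by
  ext x z
  simp [cblk, rblk, Matrix.mul_apply, Fintype.sum_prod_type, Matrix.sum_apply]

lemma mul_rblk (X : Matrix (Fin n) (Fin n) ℝ) (Q : Fin s → Matrix (Fin n) (Fin n) ℝ) :
    X * rblk Q = rblk (fun i => X * Q i) := by
  ext x ⟨j, z⟩
  simp [rblk, Matrix.mul_apply]

lemma cblk_smul (r : ℝ) (Q : Fin s → Matrix (Fin n) (Fin n) ℝ) :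
    r • cblk Q = cblk (fun i => r • Q i) := by
  ext ⟨i, x⟩ z; simp [cblk]

lemma cblk_sub (Q R : Fin s → Matrix (Fin n) (Fin n) ℝ) :
    cblk Q - cblk R = cblk (fun i => Q i - R i) := by
  ext ⟨i, x⟩ z; simp [cblk]

/-! ### Matrix exponential helpers -/

lemma expS {n : ℕ} (K : Matrix (Fin n) (Fin n) ℝ) (a b : ℝ) :
    NormedSpace.exp (a • K) * NormedSpace.exp (b • K)
      = NormedSpace.exp ((a + b) • K) := by
  rw [add_smul, Matrix.exp_add_of_commute]
  exact ((Commute.refl K).smul_left a).smul_right b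

lemma exp_smul_continuous {n : ℕ} (K : Matrix (Fin n) (Fin n) ℝ) :
    Continuous fun t : ℝ => NormedSpace.exp (t • K) := by
  letI : SeminormedRing (Matrix (Fin n) (Fin n) ℝ) := Matrix.linftyOpSemiNormedRing
  letI : NormedRing (Matrix (Fin n) (Fin n) ℝ) := Matrix.linftyOpNormedRing
  letI : NormedAlgebra ℝ (Matrix (Fin n) (Fin n) ℝ) := Matrix.linftyOpNormedAlgebra
  letI : NormedAlgebra ℚ (Matrix (Fin n) (Fin n) ℝ) := NormedAlgebra.restrictScalars ℚ ℝ _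
  exact NormedSpace.exp_continuous.comp (continuous_id.smul continuous_const)

lemma det_exp_smul_ne_zero {n : ℕ} (K : Matrix (Fin n) (Fin n) ℝ) (t : ℝ) :
    (NormedSpace.exp (t • K)).det ≠ 0 := by
  have := (Matrix.isUnit_iff_isUnit_det _).mp (Matrix.isUnit_exp (t • K))
  exact this.ne_zero

lemma det_exp_pos {n : ℕ} (K : Matrix (Fin n) (Fin n) ℝ) (h : ℝ) :
    0 < (NormedSpace.exp (h • K)).det := by
  by_contra hle
  push_neg at hle
  set f : ℝ → ℝ := fun t => (NormedSpace.exp (t • K)).det with hf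
  have hcont : Continuous f := (exp_smul_continuous K).matrix_det
  have hf0 : f 0 = 1 := by simp [hf, NormedSpace.exp_zero]
  have hfh : f h ≤ 0 := hle
  have h0mem : (0 : ℝ) ∈ Set.uIcc (f 0) (f h) := by
    rw [Set.mem_uIcc]; rw [hf0]
    right; exact ⟨hfh, zero_le_one⟩
  obtain ⟨t, _, ht⟩ := intermediate_value_uIcc (hcont.continuousOn) h0mem
  exact det_exp_smul_ne_zero K t ht

lemma P_exp {n : ℕ} (K P : Matrix (Fin n) (Fin n) ℝ) (hP : IsUnit P)
    (hK : P * K * P⁻¹ = -Kᵀ) (t : ℝ) :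
    P * NormedSpace.exp (t • K) = (NormedSpace.exp ((-t) • K))ᵀ * P := by
  have hPdet : IsUnit P.det := (Matrix.isUnit_iff_isUnit_det P).mp hP
  have hP'P : P⁻¹ * P = 1 := Matrix.nonsing_inv_mul P hPdet
  obtain ⟨U, hU⟩ := hP
  have hUinv : ((U⁻¹ : (Matrix (Fin n) (Fin n) ℝ)ˣ) : Matrix (Fin n) (Fin n) ℝ) = P⁻¹ := by
    rw [Matrix.coe_units_inv, hU]
  have hconj := Matrix.exp_units_conj U (t • K)
  rw [hU, hUinv] at hconj
  have harg : P * (t • K) * P⁻¹ = ((-t) • K)ᵀ := by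
    rw [mul_smul_comm, Matrix.smul_mul, hK, Matrix.transpose_smul, neg_smul]
    simp
  rw [harg, Matrix.exp_transpose] at hconj
  calc P * NormedSpace.exp (t • K)
      = P * NormedSpace.exp (t • K) * (P⁻¹ * P) := by rw [hP'P, Matrix.mul_one]
    _ = (P * NormedSpace.exp (t • K) * P⁻¹) * P := by rw [← Matrix.mul_assoc]
    _ = (NormedSpace.exp ((-t) • K))ᵀ * P := by rw [← hconj]

lemma det_exp_one {n : ℕ} (K P : Matrix (Fin n) (Fin n) ℝ) (hP : IsUnit P)
    (hK : P * K * P⁻¹ = -Kᵀ) (h : ℝ) :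
    (NormedSpace.exp (h • K)).det = 1 := by
  have hPdet : IsUnit P.det := (Matrix.isUnit_iff_isUnit_det P).mp hP
  have hPP : P * P⁻¹ = 1 := Matrix.mul_nonsing_inv P hPdet
  have hP'P : P⁻¹ * P = 1 := Matrix.nonsing_inv_mul P hPdet
  have hconj : P * NormedSpace.exp (h • K)
      = (NormedSpace.exp ((-h) • K))ᵀ * P := P_exp K P hP hK h
  have hdeq : (NormedSpace.exp ((-h) • K)).det = (NormedSpace.exp (h • K)).det := by
    have h5 := congrArg Matrix.det hconj
    rw [Matrix.det_mul, Matrix.det_mul, Matrix.det_transpose] at h5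
    rw [mul_comm] at h5
    exact mul_right_cancel₀ hPdet.ne_zero h5.symm
  have hprod : (NormedSpace.exp (h • K)).det * (NormedSpace.exp ((-h) • K)).det = 1 := by
    rw [← Matrix.det_mul, expS]
    rw [show h + -h = (0 : ℝ) from by ring, zero_smul, NormedSpace.exp_zero, Matrix.det_one]
  rw [hdeq] at hprod
  nlinarith [det_exp_pos K h]

/-! ### The main algebraic argument -/

lemma main_alg (h : ℝ) (A : Matrix (Fin s) (Fin s) ℝ) (b : Fin s → ℝ)
    (hsymp : ∀ i j, b i * A i j + b j * A j i - b i * b j = 0) (hb : ∀ i, b i ≠ 0)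
    (P : Matrix (Fin n) (Fin n) ℝ) (hPP : P * P⁻¹ = 1)
    (J Km Es E' : Fin s → Matrix (Fin n) (Fin n) ℝ)
    (Eij : Fin s → Fin s → Matrix (Fin n) (Fin n) ℝ)
    (X Xinv : Matrix (Fin n) (Fin n) ℝ) (Jφ : Matrix (Fin n) (Fin n) ℝ)
    (hXX : X * Xinv = 1) (hdetX : X.det = 1)
    (hEs : ∀ i j, Es i * (Xinv * E' j) = Eij i j)
    (hkeyP : ∀ i j, P * (Eij i j * J j) = -((Eij j i)ᵀ * ((J j)ᵀ * P)))
    (hstage : ∀ i, Km i = Es i + h • ∑ j, (A i j • Eij i j) * (J j * Km j))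
    (hjφ : Jφ = X + h • ∑ i, (b i • E' i) * (J i * Km i))
    (hMu : IsUnit ((1 : Matrix (Fin s × Fin n) (Fin s × Fin n) ℝ)
      - h • (blk (fun i j => A i j • Eij i j) * blk (fun i j => if i = j then J j else 0)))) :
    Jφ.det = 1 := by
  set Ab := blk (fun i j => A i j • Eij i j) with hAbd
  set Fb := blk (fun i j : Fin s => if i = j then J j else (0 : Matrix (Fin n) (Fin n) ℝ))
    with hFbd
  set Mb := (1 : Matrix (Fin s × Fin n) (Fin s × Fin n) ℝ) - h • (Ab * Fb) with hMbd
  have hAF : Ab * Fb = blk (fun i j => A i j • (Eij i j * J j)) := by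
    rw [hAbd, hFbd, blk_mul]
    apply blk_congr; intro i j
    simp [mul_ite, Finset.sum_ite_eq', smul_mul_assoc]
  have hMbblk : Mb = blk (fun i j =>
      (if i = j then 1 else 0) - (h * A i j) • (Eij i j * J j)) := by
    rw [hMbd, hAF, blk_smul, blk_one, blk_sub]
    apply blk_congr; intro i j
    rw [smul_smul]
  have hMk : Mb * cblk Km = cblk Es := by
    rw [hMbd, Matrix.sub_mul, Matrix.one_mul, Matrix.smul_mul, hAF, blk_mul_cblk,
      cblk_smul, cblk_sub]
    apply cblk_congr; intro i
    rw [hstage i]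
    have e : ∀ j, (A i j • (Eij i j * J j)) * Km j = (A i j • Eij i j) * (J j * Km j) := by
      intro j; rw [smul_mul_assoc, smul_mul_assoc, Matrix.mul_assoc]
    simp_rw [e]
    exact add_sub_cancel_right _ _
  set Wr := rblk (fun i => (b i • E' i) * J i) with hWrd
  have hjφ2 : Jφ = X + (h • Wr) * cblk Km := by
    rw [hjφ, hWrd, Matrix.smul_mul, rblk_mul_cblk]
    congr 1
    congr 1
    exact Finset.sum_congr rfl fun i _ => (Matrix.mul_assoc _ _ _).symm
  have hfact : Jφ = X * (1 + (Xinv * (h • Wr)) * cblk Km) := by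
    rw [hjφ2, Matrix.mul_add, Matrix.mul_one, ← Matrix.mul_assoc, ← Matrix.mul_assoc,
      hXX, Matrix.one_mul]
  have hdet1 : Jφ.det = X.det * (1 + cblk Km * (Xinv * (h • Wr))).det := by
    rw [hfact, Matrix.det_mul, Matrix.det_one_add_mul_comm]
  set Nb := blk (fun i j => (if i = j then 1 else 0)
    - (h * (A i j - b j)) • (Eij i j * J j)) with hNbd
  have hMplus : Mb + cblk Es * (Xinv * (h • Wr)) = Nb := by
    have h1 : Xinv * (h • Wr) = h • rblk (fun i => Xinv * ((b i • E' i) * J i)) := by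
      rw [hWrd, Matrix.mul_smul, mul_rblk]
    rw [h1, Matrix.mul_smul, cblk_mul_rblk, blk_smul, hMbblk, hNbd, blk_add]
    apply blk_congr; intro i j
    have h2 : Es i * (Xinv * ((b j • E' j) * J j)) = b j • (Eij i j * J j) := by
      rw [smul_mul_assoc, mul_smul_comm, mul_smul_comm, ← Matrix.mul_assoc Xinv,
        ← Matrix.mul_assoc, hEs]
    rw [h2, smul_smul]
    rw [show h * (A i j - b j) = h * A i j - h * b j from by ring, sub_smul]
    abel
  have hNdet : Nb.det = Mb.det := by
    set D := blk (fun i j : Fin s => if i = j then b i • P else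
      (0 : Matrix (Fin n) (Fin n) ℝ)) with hDd
    have hDD : D * blk (fun i j : Fin s => if i = j then (b i)⁻¹ • P⁻¹ else 0) = 1 := by
      rw [hDd, blk_mul, blk_one]
      apply blk_congr; intro i j
      simp only [ite_mul, mul_ite, zero_mul, mul_zero, Finset.sum_ite_eq,
        Finset.mem_univ, if_true]
      by_cases hij : i = j
      · subst hij
        simp [Matrix.smul_mul, Matrix.mul_smul, smul_smul, hPP, inv_mul_cancel₀ (hb i),
          mul_inv_cancel₀ (hb i)]
      · simp [hij]
    have hDdet : D.det ≠ 0 := by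
      intro h0
      have := congrArg Matrix.det hDD
      rw [Matrix.det_mul, h0, zero_mul, Matrix.det_one] at this
      exact zero_ne_one this
    set Gb := fun i j => (if i = j then (1 : Matrix (Fin n) (Fin n) ℝ) else 0)
      - (h * A i j) • (J i * Eij i j) with hGbd
    have hDN : D * Nb = (blk Gb)ᵀ * D := by
      rw [hDd, hNbd, blk_transpose, blk_mul, blk_mul]
      apply blk_congr; intro i j
      simp only [ite_mul, mul_ite, zero_mul, mul_zero, Finset.sum_ite_eq,
        Finset.sum_ite_eq', Finset.mem_univ, if_true]
      rw [hGbd]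
      simp only [Matrix.transpose_sub, Matrix.transpose_smul, Matrix.transpose_mul]
      have htr : ((if j = i then (1 : Matrix (Fin n) (Fin n) ℝ) else 0))ᵀ
          = (if i = j then 1 else 0) := by
        by_cases hij : j = i
        · subst hij; simp
        · rw [if_neg hij, if_neg (fun hh : i = j => hij hh.symm)]; simp
      rw [htr, mul_sub, sub_mul]
      congr 1
      · by_cases hij : i = j
        · subst hij; simp
        · simp [hij]
      · have hsc : b i * (h * (A i j - b j)) = -(h * A j i * b j) := by
          linear_combination h * hsymp i j
        calc (b i • P) * ((h * (A i j - b j)) • (Eij i j * J j))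
            = (b i * (h * (A i j - b j))) • (P * (Eij i j * J j)) := by
              rw [Matrix.smul_mul, Matrix.mul_smul, smul_smul]
          _ = (-(h * A j i * b j)) • (-((Eij j i)ᵀ * ((J j)ᵀ * P))) := by
              rw [hsc, hkeyP i j]
          _ = (h * A j i * b j) • ((Eij j i)ᵀ * ((J j)ᵀ * P)) := by
              rw [neg_smul, smul_neg, neg_neg]
          _ = ((h * A j i) • ((Eij j i)ᵀ * (J j)ᵀ)) * (b j • P) := by
              rw [Matrix.smul_mul, Matrix.mul_smul, smul_smul, Matrix.mul_assoc]
    have h1 := congrArg Matrix.det hDN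
    rw [Matrix.det_mul, Matrix.det_mul, Matrix.det_transpose] at h1
    have hNG : Nb.det = (blk Gb).det :=
      mul_left_cancel₀ hDdet (h1.trans (mul_comm _ _))
    have hGFA : blk Gb = 1 - (h • Fb) * Ab := by
      rw [hFbd, hAbd, Matrix.smul_mul, blk_mul, blk_smul, blk_one, blk_sub]
      apply blk_congr; intro i j
      rw [hGbd]
      simp [ite_mul, zero_mul, Finset.sum_ite_eq, mul_smul_comm, smul_smul]
    rw [hNG, hGFA, Matrix.det_one_sub_mul_comm, Matrix.mul_smul, hMbd]
  have hMdet : IsUnit Mb.det := (Matrix.isUnit_iff_isUnit_det Mb).mp hMu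
  have hcancel : (1 + cblk Km * (Xinv * (h • Wr))).det = 1 := by
    have e1 : Mb.det * (1 + cblk Km * (Xinv * (h • Wr))).det = Mb.det * 1 := by
      rw [← Matrix.det_mul, Matrix.mul_add, Matrix.mul_one, ← Matrix.mul_assoc, hMk,
        hMplus, hNdet, mul_one]
    exact mul_left_cancel₀ hMdet.ne_zero e1
  rw [hdet1, hcancel, mul_one, hdetX]

end Helpers

/-- **Theorem 4.1.** Special symplectic exponential integrators preserve volume for
vector fields of class `𝓗`. -/
theorem stmt_7 (n s : ℕ) (h : ℝ) (K : Matrix (Fin n) (Fin n) ℝ) (c : Fin s → ℝ)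
    (g : (Fin n → ℝ) → (Fin n → ℝ)) (hg : Differentiable ℝ g)
    (A : Matrix (Fin s) (Fin s) ℝ) (b : Fin s → ℝ)
    (hsymp : IsSymplecticRK A b) (hb : ∀ i, b i ≠ 0)
    (P : Matrix (Fin n) (Fin n) ℝ) (hP : IsUnit P)
    (hK : P * K * P⁻¹ = -Kᵀ)
    (hgH : ∀ y, P * jac g y * P⁻¹ = -(jac g y)ᵀ)
    (k : Fin s → (Fin n → ℝ) → (Fin n → ℝ))
    (hk : ∀ i, Differentiable ℝ (k i))
    (hkdef : ∀ i y, k i y =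
      (NormedSpace.exp ((c i * h) • K)).mulVec y +
        h • ∑ j, (A i j • NormedSpace.exp (((c i - c j) * h) • K)).mulVec (g (k j y)))
    (φ : (Fin n → ℝ) → (Fin n → ℝ))
    (hφ : ∀ y, φ y =
      (NormedSpace.exp (h • K)).mulVec y +
        h • ∑ i, (b i • NormedSpace.exp (((1 - c i) * h) • K)).mulVec (g (k i y)))
    (F : (Fin n → ℝ) → Matrix (Fin s × Fin n) (Fin s × Fin n) ℝ)
    (hF : ∀ y p q, F y p q = if p.1 = q.1 then jac g (k p.1 y) p.2 q.2 else 0)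
    (Ablk : Matrix (Fin s × Fin n) (Fin s × Fin n) ℝ)
    (hAblk : ∀ p q, Ablk p q =
      A p.1 q.1 * NormedSpace.exp (((c p.1 - c q.1) * h) • K) p.2 q.2) :
    ∀ y : Fin n → ℝ,
      IsUnit ((1 : Matrix (Fin s × Fin n) (Fin s × Fin n) ℝ) - h • (Ablk * F y)) →
        (jac φ y).det = 1 := by
  intro y hMu
  have hPdet : IsUnit P.det := (Matrix.isUnit_iff_isUnit_det P).mp hP
  have hPP : P * P⁻¹ = 1 := Matrix.mul_nonsing_inv P hPdet
  have hP'P : P⁻¹ * P = 1 := Matrix.nonsing_inv_mul P hPdet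
  -- Jacobian of the update map
  have hjφ : jac φ y = NormedSpace.exp (h • K) +
      h • ∑ i, (b i • NormedSpace.exp (((1 - c i) * h) • K)) *
        (jac g (k i y) * jac (k i) y) := by
    have e1 : φ = fun z => (NormedSpace.exp (h • K)).mulVec z +
        h • ∑ i, (b i • NormedSpace.exp (((1 - c i) * h) • K)).mulVec (g (k i z)) :=
      funext hφ
    rw [e1]
    exact jac_update h _ (fun i => b i • NormedSpace.exp (((1 - c i) * h) • K))
      g hg k hk y
  -- Jacobians of the stage maps
  have hstage : ∀ i, jac (k i) y = NormedSpace.exp ((c i * h) • K) +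
      h • ∑ j, (A i j • NormedSpace.exp (((c i - c j) * h) • K)) *
        (jac g (k j y) * jac (k j) y) := by
    intro i
    have e1 : k i = fun z => (NormedSpace.exp ((c i * h) • K)).mulVec z +
        h • ∑ j, (A i j • NormedSpace.exp (((c i - c j) * h) • K)).mulVec (g (k j z)) :=
      funext (hkdef i)
    rw [e1]
    exact jac_update h _ (fun j => A i j • NormedSpace.exp (((c i - c j) * h) • K))
      g hg k hk y
  -- exponential identities
  have hXX : NormedSpace.exp (h • K) * NormedSpace.exp ((-h) • K) = 1 := by
    rw [expS, show h + -h = (0 : ℝ) from by ring, zero_smul, NormedSpace.exp_zero]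
  have hdetX : (NormedSpace.exp (h • K)).det = 1 := det_exp_one K P hP hK h
  have hEs : ∀ i j : Fin s, NormedSpace.exp ((c i * h) • K) *
      (NormedSpace.exp ((-h) • K) * NormedSpace.exp (((1 - c j) * h) • K))
      = NormedSpace.exp (((c i - c j) * h) • K) := by
    intro i j
    rw [expS, expS, show c i * h + (-h + (1 - c j) * h) = (c i - c j) * h from by ring]
  -- key conjugation identity
  have hPJ : ∀ j : Fin s, P * jac g (k j y) = -((jac g (k j y))ᵀ * P) := by
    intro j
    have h3 := hgH (k j y)
    have h4 := congrArg (fun Z => Z * P) h3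
    rw [Matrix.mul_assoc (P * jac g (k j y)), hP'P, Matrix.mul_one, Matrix.neg_mul] at h4
    exact h4
  have hkeyP : ∀ i j : Fin s,
      P * (NormedSpace.exp (((c i - c j) * h) • K) * jac g (k j y)) =
      -((NormedSpace.exp (((c j - c i) * h) • K))ᵀ * ((jac g (k j y))ᵀ * P)) := by
    intro i j
    have e1 : P * NormedSpace.exp (((c i - c j) * h) • K)
        = (NormedSpace.exp (((c j - c i) * h) • K))ᵀ * P := by
      have := P_exp K P hP hK ((c i - c j) * h)
      rwa [show -((c i - c j) * h) = (c j - c i) * h from by ring] at this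
    calc P * (NormedSpace.exp (((c i - c j) * h) • K) * jac g (k j y))
        = (P * NormedSpace.exp (((c i - c j) * h) • K)) * jac g (k j y) :=
          (Matrix.mul_assoc _ _ _).symm
      _ = ((NormedSpace.exp (((c j - c i) * h) • K))ᵀ * P) * jac g (k j y) := by
          rw [e1]
      _ = (NormedSpace.exp (((c j - c i) * h) • K))ᵀ * (P * jac g (k j y)) :=
          Matrix.mul_assoc _ _ _
      _ = (NormedSpace.exp (((c j - c i) * h) • K))ᵀ *
          (-((jac g (k j y))ᵀ * P)) := by rw [hPJ j]
      _ = -((NormedSpace.exp (((c j - c i) * h) • K))ᵀ * ((jac g (k j y))ᵀ * P)) := by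
          rw [Matrix.mul_neg]
  -- rewrite the invertibility hypothesis in block form
  have hA' : Ablk = blk (fun i j => A i j •
      NormedSpace.exp (((c i - c j) * h) • K)) := by
    ext ⟨i, x⟩ ⟨j, z⟩
    rw [hAblk]
    simp [blk, Matrix.smul_apply, smul_eq_mul]
  have hF' : F y = blk (fun i j : Fin s =>
      if i = j then jac g (k j y) else (0 : Matrix (Fin n) (Fin n) ℝ)) := by
    ext ⟨i, x⟩ ⟨j, z⟩
    rw [hF]
    by_cases hij : i = j
    · subst hij; simp [blk]
    · simp [blk, hij]
  rw [hA', hF'] at hMu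
  exact main_alg h A b hsymp hb P hPP (fun j => jac g (k j y)) (fun i => jac (k i) y)
    (fun i => NormedSpace.exp ((c i * h) • K))
    (fun i => NormedSpace.exp (((1 - c i) * h) • K))
    (fun i j => NormedSpace.exp (((c i - c j) * h) • K))
    (NormedSpace.exp (h • K)) (NormedSpace.exp ((-h) • K)) (jac φ y)
    hXX hdetX hEs hkeyP hstage hjφ hMu
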